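/- Let μ ≥ 0, δ ∈ (0,1), and let N ≥ 0 be a real number satisfying N ≤ μ + √(2·μ·log(1/δ)) + (2/3)·log(1/δ). Then 2·log(1/δ) + N + √(2·N·log(1/δ)) ≤ μ + (14/3)·log(1/δ) + 2·√(2·μ·log(1/δ)); that is, U₊(N,δ) ≤ Ū₊(μ,δ). -/
import Mathlib

open Real

/-- If `μ ≥ 0`, `δ ∈ (0,1)`, `N ≥ 0` and `N ≤ μ + √(2·μ·log(1/δ)) + (2/3)·log(1/δ)`, then
`U₊(N,δ) = 2·log(1/δ) + N + √(2·N·log(1/δ)) ≤ μ + (14/3)·log(1/δ) + 2·√(2·μ·log(1/δ)) = Ū₊(μ,δ)`. -/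
theorem Uplus_le_UbarPlus (μ δ N : ℝ) (hμ : 0 ≤ μ) (hδ : δ ∈ Set.Ioo (0 : ℝ) 1) (hN : 0 ≤ N)
    (h : N ≤ μ + Real.sqrt (2 * μ * Real.log (1 / δ)) + (2 / 3) * Real.log (1 / δ)) :
    2 * Real.log (1 / δ) + N + Real.sqrt (2 * N * Real.log (1 / δ)) ≤
      μ + (14 / 3) * Real.log (1 / δ) + 2 * Real.sqrt (2 * μ * Real.log (1 / δ)) := by
  obtain ⟨hδ0, hδ1⟩ := hδ
  have hL : 0 ≤ Real.log (1 / δ) := Real.log_nonneg (by rw [le_div_iff₀ hδ0]; linarith)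
  set L := Real.log (1 / δ) with hLdef
  have hs : 0 ≤ Real.sqrt (2 * μ * L) := Real.sqrt_nonneg _
  have hsq : Real.sqrt (2 * μ * L) ^ 2 = 2 * μ * L := Real.sq_sqrt (by positivity)
  have key : Real.sqrt (2 * N * L) ≤ Real.sqrt (2 * μ * L) + 2 * L := by
    rw [show Real.sqrt (2 * μ * L) + 2 * L = Real.sqrt ((Real.sqrt (2 * μ * L) + 2 * L) ^ 2) from
      (Real.sqrt_sq (by positivity)).symm]
    apply Real.sqrt_le_sqrt
    nlinarith [mul_nonneg hL hs, mul_nonneg hL hL]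
  linarith
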